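/- Suppose ||λ(t+1) - λ*||² ≤ ||λ(t) - λ*||² + (2/V)(d(λ(t)) - d(λ*)) + 2C/V² holds for all t. Then for any δ > 0, letting E = ⌊V||λ(0) - λ*||²/δ⌋, we have d(λ*) - max_{0 ≤ t ≤ E} d(λ(t)) ≤ C/V + δ/2. -/

import Mathlib

theorem stmt_13 (n : ℕ) (V C δ : ℝ) (hV : 0 < V) (hC : 0 < C) (hδ : 0 < δ)
    (d : EuclideanSpace ℝ (Fin n) → ℝ)
    (lam : ℕ → EuclideanSpace ℝ (Fin n)) (lamstar : EuclideanSpace ℝ (Fin n))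
    (hd : ∀ t, d (lam t) ≤ d lamstar)
    (hrec : ∀ t, ‖lam (t + 1) - lamstar‖ ^ 2 ≤ ‖lam t - lamstar‖ ^ 2 +
        (2 / V) * (d (lam t) - d lamstar) + 2 * C / V ^ 2) :
    d lamstar -
      (Finset.range (⌊V * ‖lam 0 - lamstar‖ ^ 2 / δ⌋₊ + 1)).sup'
        (by simp) (fun t => d (lam t)) ≤ C / V + δ / 2 := by
  by_contra h
  push_neg at h
  set E := ⌊V * ‖lam 0 - lamstar‖ ^ 2 / δ⌋₊ with hE
  have hkey : ∀ t ∈ Finset.range (E + 1), d (lam t) - d lamstar < -(C / V + δ / 2) := by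
    intro t ht
    have hle := Finset.le_sup' (fun t => d (lam t)) ht
    linarith
  have hstep : ∀ t ≤ E, ‖lam (t + 1) - lamstar‖ ^ 2 ≤ ‖lam t - lamstar‖ ^ 2 - δ / V := by
    intro t ht
    have h1 := hrec t
    have h2 := hkey t (Finset.mem_range.mpr (Nat.lt_succ_of_le ht))
    have h3 : (2 / V) * (d (lam t) - d lamstar) ≤ (2 / V) * (-(C / V + δ / 2)) :=
      mul_le_mul_of_nonneg_left h2.le (by positivity)
    have heq : (2 / V) * (-(C / V + δ / 2)) + 2 * C / V ^ 2 = -(δ / V) := by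
      field_simp; ring
    linarith
  have hind : ∀ t, t ≤ E + 1 → ‖lam t - lamstar‖ ^ 2 ≤ ‖lam 0 - lamstar‖ ^ 2 - t * (δ / V) := by
    intro t
    induction t with
    | zero => simp
    | succ k ih =>
      intro ht
      have hk : k ≤ E := Nat.lt_succ_iff.mp ht
      have h1 := hstep k hk
      have h2 := ih (le_trans (Nat.le_succ k) ht)
      push_cast
      linarith
  have hfinal := hind (E + 1) le_rfl
  have hfloor : V * ‖lam 0 - lamstar‖ ^ 2 / δ < (E : ℝ) + 1 := by
    have h0 := Nat.lt_floor_add_one (V * ‖lam 0 - lamstar‖ ^ 2 / δ)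
    rw [← hE] at h0
    exact_mod_cast h0
  have hmul : V * ‖lam 0 - lamstar‖ ^ 2 / δ * (δ / V) = ‖lam 0 - lamstar‖ ^ 2 := by
    field_simp
  have hgt : ((E : ℝ) + 1) * (δ / V) > ‖lam 0 - lamstar‖ ^ 2 := by
    nlinarith [div_pos hδ hV]
  have := sq_nonneg ‖lam (E + 1) - lamstar‖
  push_cast at hfinal
  nlinarith
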